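/- Every point of {0} ∪ 𝒮₂ ∪ 𝒮₄ ∪ 𝒮₆ ∪ 𝒮₇ is an extreme point of the convex hull of {0} ∪ 𝒮₁ ∪ 𝒮₂ ∪ 𝒮₃ ∪ 𝒮₄ ∪ 𝒮₅ ∪ 𝒮₆ ∪ 𝒮₇. -/
import Mathlib


namespace CCPoly

/-- The `i`-th standard basis vector of `ℝⁿ`. -/
noncomputable def ee (n : ℕ) (i : Fin n) : Fin n → ℝ := Pi.single i 1

/-- 𝒮₁ = {eᵢ : i ∈ N_s}. -/
def S1 (ns nd : ℕ) : Set (Fin (ns + nd) → ℝ) :=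
  {x | ∃ i : Fin (ns + nd), (i : ℕ) < ns ∧ x = ee (ns + nd) i}

/-- 𝒮₂ = {eᵢ : i ∈ N_d}. -/
def S2 (ns nd : ℕ) : Set (Fin (ns + nd) → ℝ) :=
  {x | ∃ i : Fin (ns + nd), ns ≤ (i : ℕ) ∧ x = ee (ns + nd) i}

/-- 𝒮₃ = {eᵢ + eⱼ : i ≠ j ∈ N_s}. -/
def S3 (ns nd : ℕ) : Set (Fin (ns + nd) → ℝ) :=
  {x | ∃ i j : Fin (ns + nd), i ≠ j ∧ (i : ℕ) < ns ∧ (j : ℕ) < ns ∧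
        x = ee (ns + nd) i + ee (ns + nd) j}

/-- 𝒮₄ = {eᵢ + eⱼ : i ∈ N_s, j ∈ N_d}. -/
def S4 (ns nd : ℕ) : Set (Fin (ns + nd) → ℝ) :=
  {x | ∃ i j : Fin (ns + nd), (i : ℕ) < ns ∧ ns ≤ (j : ℕ) ∧
        x = ee (ns + nd) i + ee (ns + nd) j}

/-- 𝒮₅ = {eᵢ + eⱼ + eₖ : i, j, k ∈ N_s pairwise distinct}. -/
def S5 (ns nd : ℕ) : Set (Fin (ns + nd) → ℝ) :=
  {x | ∃ i j k : Fin (ns + nd), i ≠ j ∧ i ≠ k ∧ j ≠ k ∧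
        (i : ℕ) < ns ∧ (j : ℕ) < ns ∧ (k : ℕ) < ns ∧
        x = ee (ns + nd) i + ee (ns + nd) j + ee (ns + nd) k}

/-- 𝒮₆ = {2eᵢ : i ∈ N_s}. -/
def S6 (ns nd : ℕ) : Set (Fin (ns + nd) → ℝ) :=
  {x | ∃ i : Fin (ns + nd), (i : ℕ) < ns ∧ x = (2 : ℝ) • ee (ns + nd) i}

/-- 𝒮₇ = {2eᵢ + eⱼ : i ≠ j ∈ N_s}. -/
def S7 (ns nd : ℕ) : Set (Fin (ns + nd) → ℝ) :=
  {x | ∃ i j : Fin (ns + nd), i ≠ j ∧ (i : ℕ) < ns ∧ (j : ℕ) < ns ∧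
        x = (2 : ℝ) • ee (ns + nd) i + ee (ns + nd) j}

/-- 𝒟₁ = {eᵢ : i ∈ N_d}. -/
def D1 (ns nd : ℕ) : Set (Fin (ns + nd) → ℝ) :=
  {x | ∃ i : Fin (ns + nd), ns ≤ (i : ℕ) ∧ x = ee (ns + nd) i}

/-- 𝒟₂ = {eᵢ + eⱼ : i ≠ j ∈ N_d}. -/
def D2 (ns nd : ℕ) : Set (Fin (ns + nd) → ℝ) :=
  {x | ∃ i j : Fin (ns + nd), i ≠ j ∧ ns ≤ (i : ℕ) ∧ ns ≤ (j : ℕ) ∧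
        x = ee (ns + nd) i + ee (ns + nd) j}

/-- 𝒟₃ = {2eᵢ : i ∈ N_d}. -/
def D3 (ns nd : ℕ) : Set (Fin (ns + nd) → ℝ) :=
  {x | ∃ i : Fin (ns + nd), ns ≤ (i : ℕ) ∧ x = (2 : ℝ) • ee (ns + nd) i}

/-- 𝒟₄ = {eᵢ : i ∈ N_s}. -/
def D4 (ns nd : ℕ) : Set (Fin (ns + nd) → ℝ) :=
  {x | ∃ i : Fin (ns + nd), (i : ℕ) < ns ∧ x = ee (ns + nd) i}

/-- 𝒟₅ = {eᵢ + eⱼ : i ≠ j ∈ N_s}. -/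
def D5 (ns nd : ℕ) : Set (Fin (ns + nd) → ℝ) :=
  {x | ∃ i j : Fin (ns + nd), i ≠ j ∧ (i : ℕ) < ns ∧ (j : ℕ) < ns ∧
        x = ee (ns + nd) i + ee (ns + nd) j}

/-- 𝒟₆ = {eᵢ + eⱼ : i ∈ N_s, j ∈ N_d}. -/
def D6 (ns nd : ℕ) : Set (Fin (ns + nd) → ℝ) :=
  {x | ∃ i j : Fin (ns + nd), (i : ℕ) < ns ∧ ns ≤ (j : ℕ) ∧
        x = ee (ns + nd) i + ee (ns + nd) j}

/-- 𝒟₇ = {eᵢ + eⱼ + eₖ : i ≠ j ∈ N_s, k ∈ N_d}. -/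
def D7 (ns nd : ℕ) : Set (Fin (ns + nd) → ℝ) :=
  {x | ∃ i j k : Fin (ns + nd), i ≠ j ∧ (i : ℕ) < ns ∧ (j : ℕ) < ns ∧ ns ≤ (k : ℕ) ∧
        x = ee (ns + nd) i + ee (ns + nd) j + ee (ns + nd) k}

/-- 𝒟₈ = {eᵢ + eⱼ + eₖ : i, j, k ∈ N_s pairwise distinct}. -/
def D8 (ns nd : ℕ) : Set (Fin (ns + nd) → ℝ) :=
  {x | ∃ i j k : Fin (ns + nd), i ≠ j ∧ i ≠ k ∧ j ≠ k ∧
        (i : ℕ) < ns ∧ (j : ℕ) < ns ∧ (k : ℕ) < ns ∧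
        x = ee (ns + nd) i + ee (ns + nd) j + ee (ns + nd) k}

/-- 𝒟₉ = {eᵢ + eⱼ + eₖ + eₗ : i, j, k, l ∈ N_s pairwise distinct}. -/
def D9 (ns nd : ℕ) : Set (Fin (ns + nd) → ℝ) :=
  {x | ∃ i j k l : Fin (ns + nd), i ≠ j ∧ i ≠ k ∧ i ≠ l ∧ j ≠ k ∧ j ≠ l ∧ k ≠ l ∧
        (i : ℕ) < ns ∧ (j : ℕ) < ns ∧ (k : ℕ) < ns ∧ (l : ℕ) < ns ∧
        x = ee (ns + nd) i + ee (ns + nd) j + ee (ns + nd) k + ee (ns + nd) l}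

/-- 𝒟₁₀ = {2eᵢ : i ∈ N_s}. -/
def D10 (ns nd : ℕ) : Set (Fin (ns + nd) → ℝ) :=
  {x | ∃ i : Fin (ns + nd), (i : ℕ) < ns ∧ x = (2 : ℝ) • ee (ns + nd) i}

/-- 𝒟₁₁ = {2eᵢ + eⱼ : i ∈ N_s, j ∈ N_d}. -/
def D11 (ns nd : ℕ) : Set (Fin (ns + nd) → ℝ) :=
  {x | ∃ i j : Fin (ns + nd), (i : ℕ) < ns ∧ ns ≤ (j : ℕ) ∧
        x = (2 : ℝ) • ee (ns + nd) i + ee (ns + nd) j}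

/-- 𝒟₁₂ = {2eᵢ + 2eⱼ : i ≠ j ∈ N_s}. -/
def D12 (ns nd : ℕ) : Set (Fin (ns + nd) → ℝ) :=
  {x | ∃ i j : Fin (ns + nd), i ≠ j ∧ (i : ℕ) < ns ∧ (j : ℕ) < ns ∧
        x = (2 : ℝ) • ee (ns + nd) i + (2 : ℝ) • ee (ns + nd) j}

/-- every point of {0} ∪ 𝒮₂ ∪ 𝒮₄ ∪ 𝒮₆ ∪ 𝒮₇ is an extreme point of
conv({0} ∪ 𝒮₁ ∪ ⋯ ∪ 𝒮₇). -/
noncomputable def L (n : ℕ) (w : Fin n → ℝ) : (Fin n → ℝ) →ₗ[ℝ] ℝ :=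
  ∑ k, w k • (LinearMap.proj k : (Fin n → ℝ) →ₗ[ℝ] ℝ)

lemma L_ee (n : ℕ) (w : Fin n → ℝ) (i : Fin n) : L n w (ee n i) = w i := by
  simp [L, ee, LinearMap.sum_apply, Pi.single_apply, mul_ite, Finset.sum_ite_eq']

lemma exposed_mem_extremePoints {n : ℕ} (A : Set (Fin n → ℝ))
    (f : (Fin n → ℝ) →ₗ[ℝ] ℝ) (x : Fin n → ℝ) (hx : x ∈ A)
    (h : ∀ y ∈ A, y ≠ x → f y < f x) :
    x ∈ Set.extremePoints ℝ (convexHull ℝ A) := by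
  have hle : ∀ y ∈ convexHull ℝ A, f y ≤ f x := by
    intro y hy
    have hsub : convexHull ℝ A ⊆ {z | f z ≤ f x} := by
      apply convexHull_min
      · intro z hz
        by_cases hzx : z = x
        · simp [hzx]
        · exact (h z hz hzx).le
      · exact convex_halfSpace_le f.isLinear _
    exact hsub hy
  have heq : ∀ y ∈ convexHull ℝ A, f y = f x → y = x := by
    intro y hy hfy
    rw [convexHull_eq] at hy
    obtain ⟨ι, t, wt, z, hw0, hw1, hz, hyz⟩ := hy
    rw [Finset.centerMass_eq_of_sum_1 _ _ hw1] at hyz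
    by_contra hyx
    have hex : ∃ i ∈ t, 0 < wt i ∧ z i ≠ x := by
      by_contra hc
      push_neg at hc
      apply hyx
      rw [← hyz]
      have : ∀ i ∈ t, wt i • z i = wt i • x := by
        intro i hi
        rcases eq_or_lt_of_le (hw0 i hi) with h0 | h0
        · simp [← h0]
        · rw [hc i hi h0]
      rw [Finset.sum_congr rfl this, ← Finset.sum_smul, hw1, one_smul]
    obtain ⟨i, hit, hwi, hzi⟩ := hex
    have hlt : ∑ j ∈ t, wt j * f (z j) < ∑ j ∈ t, wt j * f x := by
      apply Finset.sum_lt_sum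
      · intro j hj
        apply mul_le_mul_of_nonneg_left _ (hw0 j hj)
        by_cases hz' : z j = x
        · simp [hz']
        · exact (h _ (hz j hj) hz').le
      · exact ⟨i, hit, mul_lt_mul_of_pos_left (h _ (hz i hit) hzi) hwi⟩
    rw [← Finset.sum_mul, hw1, one_mul] at hlt
    have hfy' : f y = ∑ j ∈ t, wt j * f (z j) := by
      rw [← hyz]; simp [map_sum, map_smul, smul_eq_mul]
    rw [← hfy'] at hlt
    exact absurd hfy (ne_of_lt hlt)
  apply exposedPoints_subset_extremePoints
  exact ⟨subset_convexHull ℝ A hx, LinearMap.toContinuousLinearMap f, fun y hy =>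
    ⟨hle y hy, fun hge => heq y hy (le_antisymm (hle y hy) hge)⟩⟩

set_option maxHeartbeats 2000000 in
theorem singles_extreme_points (ns nd : ℕ) (hns : 0 < ns) (hnd : 0 < nd) :
    ∀ x ∈ (({0} : Set (Fin (ns + nd) → ℝ)) ∪ S2 ns nd ∪ S4 ns nd ∪ S6 ns nd ∪ S7 ns nd),
      x ∈ Set.extremePoints ℝ (convexHull ℝ
        (({0} : Set (Fin (ns + nd) → ℝ)) ∪ S1 ns nd ∪ S2 ns nd ∪ S3 ns nd ∪ S4 ns nd ∪
          S5 ns nd ∪ S6 ns nd ∪ S7 ns nd)) := by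
  intro x hx
  rcases hx with ((((hx | hx) | hx) | hx) | hx)
  · -- x = 0
    rcases hx with rfl
    apply exposed_mem_extremePoints _ (L _ (fun _ => (-1 : ℝ)))
    · simp only [Set.mem_union]; exact Or.inl (Or.inl (Or.inl (Or.inl (Or.inl (Or.inl (Or.inl rfl))))))
    · rintro y (((((((rfl | ⟨i', hi', rfl⟩) | ⟨j', hj', rfl⟩) | ⟨i', j', hij, hi', hj', rfl⟩) |
        ⟨i', j', hi', hj', rfl⟩) | ⟨i', j', k', h1, h2, h3, hi', hj', hk', rfl⟩) |
        ⟨i', hi', rfl⟩) | ⟨i', j', hij, hi', hj', rfl⟩) hyx <;>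
      simp only [map_add, map_smul, map_zero, L_ee, smul_eq_mul] <;>
      first | (exact absurd rfl hyx) | norm_num
  · -- x = ee j, j ∈ N_d
    obtain ⟨j, hj, rfl⟩ := hx
    apply exposed_mem_extremePoints _ (L _ (fun k => if k = j then (2 : ℝ) else -1))
    · simp only [Set.mem_union]
      exact Or.inl (Or.inl (Or.inl (Or.inl (Or.inl (Or.inr ⟨j, hj, rfl⟩)))))
    · rintro y (((((((rfl | ⟨i', hi', rfl⟩) | ⟨j', hj', rfl⟩) | ⟨i', j', hij, hi', hj', rfl⟩) |
        ⟨i', j', hi', hj', rfl⟩) | ⟨i', j', k', h1, h2, h3, hi', hj', hk', rfl⟩) |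
        ⟨i', hi', rfl⟩) | ⟨i', j', hij, hi', hj', rfl⟩) hyx <;>
      simp only [map_add, map_smul, map_zero, L_ee, smul_eq_mul] <;>
      split_ifs <;>
      first | (exact absurd rfl hyx) | (norm_num; done) | (simp_all; done) | (simp_all; omega)
  · -- x = ee i + ee j, i ∈ N_s, j ∈ N_d
    obtain ⟨i, j, hi, hj, rfl⟩ := hx
    apply exposed_mem_extremePoints _
      (L _ (fun k => if k = i then (1 : ℝ) else if k = j then 2 else -1))
    · simp only [Set.mem_union]
      exact Or.inl (Or.inl (Or.inl (Or.inr ⟨i, j, hi, hj, rfl⟩)))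
    · rintro y (((((((rfl | ⟨i', hi', rfl⟩) | ⟨j', hj', rfl⟩) | ⟨i', j', hij, hi', hj', rfl⟩) |
        ⟨i', j', hi', hj', rfl⟩) | ⟨i', j', k', h1, h2, h3, hi', hj', hk', rfl⟩) |
        ⟨i', hi', rfl⟩) | ⟨i', j', hij, hi', hj', rfl⟩) hyx <;>
      simp only [map_add, map_smul, map_zero, L_ee, smul_eq_mul] <;>
      split_ifs <;>
      first | (exact absurd rfl hyx) | (norm_num; done) | (simp_all; done) | (simp_all; omega)
  · -- x = 2 ee i
    obtain ⟨i, hi, rfl⟩ := hx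
    apply exposed_mem_extremePoints _ (L _ (fun k => if k = i then (2 : ℝ) else -1))
    · simp only [Set.mem_union]
      exact Or.inl (Or.inr ⟨i, hi, rfl⟩)
    · rintro y (((((((rfl | ⟨i', hi', rfl⟩) | ⟨j', hj', rfl⟩) | ⟨i', j', hij, hi', hj', rfl⟩) |
        ⟨i', j', hi', hj', rfl⟩) | ⟨i', j', k', h1, h2, h3, hi', hj', hk', rfl⟩) |
        ⟨i', hi', rfl⟩) | ⟨i', j', hij, hi', hj', rfl⟩) hyx <;>
      simp only [map_add, map_smul, map_zero, L_ee, smul_eq_mul] <;>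
      split_ifs <;>
      first | (exact absurd rfl hyx) | (norm_num; done) | (simp_all; done) | (simp_all; omega)
  · -- x = 2 ee i + ee j, i ≠ j ∈ N_s
    obtain ⟨i, j, hij0, hi, hj, rfl⟩ := hx
    apply exposed_mem_extremePoints _
      (L _ (fun k => if k = i then (2 : ℝ) else if k = j then 1 else -1))
    · simp only [Set.mem_union]
      exact Or.inr ⟨i, j, hij0, hi, hj, rfl⟩
    · rintro y (((((((rfl | ⟨i', hi', rfl⟩) | ⟨j', hj', rfl⟩) | ⟨i', j', hij, hi', hj', rfl⟩) |
        ⟨i', j', hi', hj', rfl⟩) | ⟨i', j', k', h1, h2, h3, hi', hj', hk', rfl⟩) |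
        ⟨i', hi', rfl⟩) | ⟨i', j', hij, hi', hj', rfl⟩) hyx <;>
      simp only [map_add, map_smul, map_zero, L_ee, smul_eq_mul] <;>
      split_ifs <;>
      first | (exact absurd rfl hyx) | (norm_num; done) | (simp_all; done) | (simp_all; omega)


end CCPoly
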